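/- arXiv:2201.10197 — 2 statements merged into one kernel-verified Lean document; each statement's English description precedes it below -/
import Mathlib

section
/- Let $A, B$ be real matrices with $A \in \mathbb{R}^{n\times n}$, $B \in \mathbb{R}^{n\times m}$, and let $\hat{A}, \hat{B}$ satisfy $\|A - \hat{A}\| \le \varepsilon$ and $\|B - \hat{B}\| \le \varepsilon$ for some $\varepsilon \ge 0$. Let $\ell \ge 1$ and define the controllability matrices $\mathcal{C}_\ell = [B\; AB\; \cdots\; A^{\ell-1}B]$ and $\hat{\mathcal{C}}_\ell = [\hat{B}\; \hat{A}\hat{B}\; \cdots\; \hat{A}^{\ell-1}\hat{B}]$. If $\sigma_n(\mathcal{C}_\ell) \ge \nu$ for some $\nu > 0$, then $\sigma_n(\hat{\mathcal{C}}_\ell) \ge \nu - \varepsilon \ell^{3/2} \beta^{\ell-1}(\|B\| + 1)$, where $\beta = \max\{1, \varepsilon + \|A\|\}$. -/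
open scoped Matrix.Norms.L2Operator InnerProductSpace
open Matrix

/-- The `n`-th largest singular value of a matrix with `n` rows:
the square root of the smallest eigenvalue of `M * Mᴴ`. -/
noncomputable def sigmaN {n : ℕ} {p : Type*} [Fintype p] (M : Matrix (Fin n) p ℝ) : ℝ :=
  Real.sqrt (⨅ i : Fin n, (Matrix.isHermitian_mul_conjTranspose_self M).eigenvalues i)

/-- The controllability matrix `[B  AB  ⋯  A^(ℓ-1)B]` (horizontal concatenation). -/
noncomputable def ctrbMat {n m : ℕ} (A : Matrix (Fin n) (Fin n) ℝ)
    (B : Matrix (Fin n) (Fin m) ℝ) (ℓ : ℕ) : Matrix (Fin n) (Fin ℓ × Fin m) ℝ :=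
  Matrix.of fun i jr => (A ^ (jr.1 : ℕ) * B) i jr.2

variable {n : ℕ} {p : Type*} [Fintype p]

lemma dotSelf_eq_normSq (v : p → ℝ) :
    v ⬝ᵥ v = ‖(EuclideanSpace.equiv p ℝ).symm v‖ ^ 2 := by
  rw [← real_inner_self_eq_norm_sq]
  simp only [PiLp.inner_apply, dotProduct]
  simp [sq]

lemma dot_mul_conjTranspose (M : Matrix (Fin n) p ℝ) (x : Fin n → ℝ) :
    x ⬝ᵥ ((M * Mᴴ) *ᵥ x) = (Mᴴ *ᵥ x) ⬝ᵥ (Mᴴ *ᵥ x) := by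
  rw [← mulVec_mulVec, dotProduct_mulVec, conjTranspose_eq_transpose_of_trivial,
    mulVec_transpose]

lemma rayleigh_lower (M : Matrix (Fin n) p ℝ) (x : EuclideanSpace ℝ (Fin n)) :
    (⨅ i, (Matrix.isHermitian_mul_conjTranspose_self M).eigenvalues i) * ‖x‖ ^ 2
      ≤ (x : Fin n → ℝ) ⬝ᵥ ((M * Mᴴ) *ᵥ x) := by
  set hM := Matrix.isHermitian_mul_conjTranspose_self M with hMdef
  set b := hM.eigenvectorBasis with hb
  set lam := hM.eigenvalues with hlam
  have hbd : BddBelow (Set.range lam) := Set.Finite.bddBelow (Set.finite_range _)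
  have hinner : ∀ i, ⟪b i, (EuclideanSpace.equiv (Fin n) ℝ).symm ((M * Mᴴ) *ᵥ x)⟫_ℝ
      = lam i * ⟪b i, x⟫_ℝ := by
    intro i
    have h1 : ⟪b i, (EuclideanSpace.equiv (Fin n) ℝ).symm ((M * Mᴴ) *ᵥ x)⟫_ℝ
        = (⇑(b i) : Fin n → ℝ) ⬝ᵥ ((M * Mᴴ) *ᵥ x) := by
      simp [PiLp.inner_apply, dotProduct, mul_comm]
    have h2 : ⟪b i, x⟫_ℝ = (⇑(b i) : Fin n → ℝ) ⬝ᵥ (x : Fin n → ℝ) := by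
      simp [PiLp.inner_apply, dotProduct, mul_comm]
    rw [h1, h2, dotProduct_mulVec]
    have hsym : (⇑(b i) : Fin n → ℝ) ᵥ* (M * Mᴴ) = lam i • ⇑(b i) := by
      rw [← mulVec_transpose]
      rw [show (M * Mᴴ)ᵀ = M * Mᴴ by
        rw [← conjTranspose_eq_transpose_of_trivial]; exact hM]
      exact hM.mulVec_eigenvectorBasis i
    rw [hsym, smul_dotProduct, smul_eq_mul]
  have hx : (x : Fin n → ℝ) ⬝ᵥ ((M * Mᴴ) *ᵥ x)
      = ⟪x, (EuclideanSpace.equiv (Fin n) ℝ).symm ((M * Mᴴ) *ᵥ x)⟫_ℝ := by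
    simp [PiLp.inner_apply, dotProduct, mul_comm]
  rw [hx, ← OrthonormalBasis.sum_inner_mul_inner b]
  have hx2 : ‖x‖ ^ 2 = ∑ i, ⟪x, b i⟫_ℝ * ⟪b i, x⟫_ℝ := by
    rw [OrthonormalBasis.sum_inner_mul_inner b, real_inner_self_eq_norm_sq]
  rw [hx2, Finset.mul_sum]
  apply Finset.sum_le_sum
  intro i _
  rw [hinner i, real_inner_comm (b i) x]
  have h := ciInf_le hbd i
  nlinarith [sq_nonneg (⟪x, b i⟫_ℝ), h]

lemma norm_euc (v : p → ℝ) :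
    ‖(EuclideanSpace.equiv p ℝ).symm v‖ = Real.sqrt (v ⬝ᵥ v) := by
  rw [dotSelf_eq_normSq, Real.sqrt_sq (norm_nonneg _)]

lemma sigmaN_le_add [DecidableEq p] (hn : 0 < n) (M N : Matrix (Fin n) p ℝ) :
    sigmaN M ≤ sigmaN N + ‖M - N‖ := by
  have : Nonempty (Fin n) := ⟨⟨0, hn⟩⟩
  set hN := Matrix.isHermitian_mul_conjTranspose_self N with hNdef
  obtain ⟨i₀, hi₀⟩ := exists_eq_ciInf_of_finite (f := hN.eigenvalues)
  set x := hN.eigenvectorBasis i₀ with hxdef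
  have hx1 : ‖x‖ = 1 := hN.eigenvectorBasis.orthonormal.1 i₀
  -- ‖Nᴴ *ᵥ x‖ = sigmaN N
  have hNx : (⇑x : Fin n → ℝ) ⬝ᵥ ((N * Nᴴ) *ᵥ ⇑x) = ⨅ i, hN.eigenvalues i := by
    rw [hN.mulVec_eigenvectorBasis i₀, dotProduct_smul, smul_eq_mul]
    have : (⇑x : Fin n → ℝ) ⬝ᵥ ⇑x = 1 := by
      have := dotSelf_eq_normSq (⇑x : Fin n → ℝ)
      rw [show (EuclideanSpace.equiv (Fin n) ℝ).symm (⇑x : Fin n → ℝ) = x from rfl, hx1] at this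
      simpa using this
    rw [this, mul_one, hi₀]
  have hvN : ‖(EuclideanSpace.equiv p ℝ).symm (Nᴴ *ᵥ ⇑x)‖ = sigmaN N := by
    rw [norm_euc, ← dot_mul_conjTranspose, hNx]; rfl
  -- sigmaN M ≤ ‖Mᴴ *ᵥ x‖
  have hvM : sigmaN M ≤ ‖(EuclideanSpace.equiv p ℝ).symm (Mᴴ *ᵥ ⇑x)‖ := by
    rw [norm_euc, ← dot_mul_conjTranspose]
    apply Real.sqrt_le_sqrt
    have := rayleigh_lower M x
    rw [hx1] at this; simpa using this
  -- triangle
  have htri : ‖(EuclideanSpace.equiv p ℝ).symm (Mᴴ *ᵥ ⇑x)‖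
      ≤ ‖(EuclideanSpace.equiv p ℝ).symm (Nᴴ *ᵥ ⇑x)‖
        + ‖(EuclideanSpace.equiv p ℝ).symm ((M - N)ᴴ *ᵥ ⇑x)‖ := by
    have heq : (EuclideanSpace.equiv p ℝ).symm (Mᴴ *ᵥ ⇑x)
        = (EuclideanSpace.equiv p ℝ).symm (Nᴴ *ᵥ ⇑x)
          + (EuclideanSpace.equiv p ℝ).symm ((M - N)ᴴ *ᵥ ⇑x) := by
      have h0 : Mᴴ *ᵥ ⇑x = Nᴴ *ᵥ ⇑x + (M - N)ᴴ *ᵥ ⇑x := by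
        rw [← Matrix.add_mulVec, ← Matrix.conjTranspose_add, add_sub_cancel]
      rw [h0, map_add]
    rw [heq]; exact norm_add_le _ _
  have hpert : ‖(EuclideanSpace.equiv p ℝ).symm ((M - N)ᴴ *ᵥ ⇑x)‖ ≤ ‖M - N‖ := by
    calc ‖(EuclideanSpace.equiv p ℝ).symm ((M - N)ᴴ *ᵥ ⇑x)‖
        ≤ ‖(M - N)ᴴ‖ * ‖x‖ := Matrix.l2_opNorm_mulVec _ _
      _ = ‖M - N‖ := by rw [hx1, mul_one, Matrix.l2_opNorm_conjTranspose]
  linarith [hvM, htri, hpert, hvN]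

lemma block_norm_le {n m ℓ : ℕ} (D : Matrix (Fin n) (Fin ℓ × Fin m) ℝ) (K : ℝ) (hK : 0 ≤ K)
    (h : ∀ k : Fin ℓ, ‖(Matrix.of fun i j => D i (k, j) : Matrix (Fin n) (Fin m) ℝ)‖ ≤ K) :
    ‖D‖ ≤ Real.sqrt ℓ * K := by
  rw [Matrix.l2_opNorm_def]
  apply ContinuousLinearMap.opNorm_le_bound _ (by positivity)
  intro x
  show ‖(EuclideanSpace.equiv (Fin n) ℝ).symm (D *ᵥ ⇑x)‖ ≤ Real.sqrt ℓ * K * ‖x‖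
  set xk : Fin ℓ → EuclideanSpace ℝ (Fin m) :=
    fun k => (EuclideanSpace.equiv (Fin m) ℝ).symm (fun j => x (k, j)) with hxk
  have hsplit : (D *ᵥ (⇑x : Fin ℓ × Fin m → ℝ))
      = ∑ k : Fin ℓ, (Matrix.of fun i j => D i (k, j) : Matrix (Fin n) (Fin m) ℝ) *ᵥ ⇑(xk k) := by
    ext i
    simp only [Matrix.mulVec, dotProduct, Finset.sum_apply, Fintype.sum_prod_type]
    rfl
  have h1 : ‖(EuclideanSpace.equiv (Fin n) ℝ).symm (D *ᵥ ⇑x)‖ ≤ ∑ k, K * ‖xk k‖ := by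
    rw [hsplit, map_sum]
    refine (norm_sum_le _ _).trans (Finset.sum_le_sum fun k _ => ?_)
    exact (Matrix.l2_opNorm_mulVec _ _).trans (mul_le_mul_of_nonneg_right (h k) (norm_nonneg _))
  have hparse : ∑ k, ‖xk k‖ ^ 2 = ‖x‖ ^ 2 := by
    have hx : ‖x‖ ^ 2 = ∑ q : Fin ℓ × Fin m, ‖x q‖ ^ 2 := by
      rw [EuclideanSpace.norm_eq, Real.sq_sqrt (by positivity)]
    have hk : ∀ k, ‖xk k‖ ^ 2 = ∑ j : Fin m, ‖x (k, j)‖ ^ 2 := by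
      intro k
      rw [EuclideanSpace.norm_eq, Real.sq_sqrt (by positivity)]
      rfl
    simp only [hk, hx, Fintype.sum_prod_type]
  have h2 : ∑ k, ‖xk k‖ ≤ Real.sqrt ℓ * ‖x‖ := by
    have hsq : (∑ k, ‖xk k‖) ^ 2 ≤ (ℓ : ℝ) * ∑ k, ‖xk k‖ ^ 2 := by
      have := sq_sum_le_card_mul_sum_sq (s := (Finset.univ : Finset (Fin ℓ)))
        (f := fun k => ‖xk k‖)
      simpa using this
    rw [hparse] at hsq
    have hsn : 0 ≤ ∑ k, ‖xk k‖ := Finset.sum_nonneg fun _ _ => norm_nonneg _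
    calc ∑ k, ‖xk k‖ ≤ Real.sqrt ((ℓ : ℝ) * ‖x‖ ^ 2) := by
          rw [show ∑ k, ‖xk k‖ = Real.sqrt ((∑ k, ‖xk k‖) ^ 2) by
            rw [Real.sqrt_sq hsn]]
          exact Real.sqrt_le_sqrt hsq
      _ = Real.sqrt ℓ * ‖x‖ := by
          rw [Real.sqrt_mul (by positivity), Real.sqrt_sq (norm_nonneg _)]
  calc ‖(EuclideanSpace.equiv (Fin n) ℝ).symm (D *ᵥ ⇑x)‖ ≤ ∑ k, K * ‖xk k‖ := h1
    _ = K * ∑ k, ‖xk k‖ := by rw [Finset.mul_sum]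
    _ ≤ K * (Real.sqrt ℓ * ‖x‖) := mul_le_mul_of_nonneg_left h2 hK
    _ = Real.sqrt ℓ * K * ‖x‖ := by ring

lemma norm_one_le {n : ℕ} : ‖(1 : Matrix (Fin n) (Fin n) ℝ)‖ ≤ 1 := by
  rw [Matrix.cstar_norm_def, _root_.map_one]
  exact ContinuousLinearMap.norm_id_le

lemma norm_pow_le_pow {n : ℕ} (A : Matrix (Fin n) (Fin n) ℝ) (β : ℝ) (hβ : 1 ≤ β)
    (hA : ‖A‖ ≤ β) : ∀ k : ℕ, ‖A ^ k‖ ≤ β ^ k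
  | 0 => by simpa using norm_one_le
  | (k + 1) => by
    calc ‖A ^ (k + 1)‖ = ‖A * A ^ k‖ := by rw [pow_succ']
      _ ≤ ‖A‖ * ‖A ^ k‖ := Matrix.l2_opNorm_mul _ _
      _ ≤ β * β ^ k := by
          apply mul_le_mul hA (norm_pow_le_pow A β hβ hA k) (norm_nonneg _) (by linarith)
      _ = β ^ (k + 1) := by rw [pow_succ']

lemma norm_pow_sub_pow {n : ℕ} (A Ahat : Matrix (Fin n) (Fin n) ℝ) (β ε : ℝ) (hβ : 1 ≤ β)
    (hA : ‖A‖ ≤ β) (hAh : ‖Ahat‖ ≤ β) (hd : ‖A - Ahat‖ ≤ ε) (hε : 0 ≤ ε) :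
    ∀ k : ℕ, ‖A ^ k - Ahat ^ k‖ ≤ k * ε * β ^ (k - 1)
  | 0 => by simp
  | (k + 1) => by
    have hsplit : A ^ (k + 1) - Ahat ^ (k + 1)
        = A * (A ^ k - Ahat ^ k) + (A - Ahat) * Ahat ^ k := by
      rw [mul_sub, sub_mul, pow_succ', pow_succ']
      abel
    have ih := norm_pow_sub_pow A Ahat β ε hβ hA hAh hd hε k
    have h1 : ‖A * (A ^ k - Ahat ^ k)‖ ≤ β * (k * ε * β ^ (k - 1)) := by
      calc ‖A * (A ^ k - Ahat ^ k)‖ ≤ ‖A‖ * ‖A ^ k - Ahat ^ k‖ := Matrix.l2_opNorm_mul _ _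
        _ ≤ β * (k * ε * β ^ (k - 1)) := by
            apply mul_le_mul hA ih (norm_nonneg _) (by linarith)
    have h2 : ‖(A - Ahat) * Ahat ^ k‖ ≤ ε * β ^ k := by
      calc ‖(A - Ahat) * Ahat ^ k‖ ≤ ‖A - Ahat‖ * ‖Ahat ^ k‖ := Matrix.l2_opNorm_mul _ _
        _ ≤ ε * β ^ k := by
            apply mul_le_mul hd (norm_pow_le_pow Ahat β hβ hAh k) (norm_nonneg _) hε
    have hb : β * (k * ε * β ^ (k - 1)) ≤ k * ε * β ^ k := by
      rcases Nat.eq_zero_or_pos k with hk | hk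
      · subst hk; simp
      · have : β ^ (k - 1) * β = β ^ k := by
          rw [← pow_succ, Nat.sub_add_cancel hk]
        calc β * (↑k * ε * β ^ (k - 1)) = ↑k * ε * (β ^ (k - 1) * β) := by ring
          _ = ↑k * ε * β ^ k := by rw [this]
          _ ≤ ↑k * ε * β ^ k := le_refl _
    calc ‖A ^ (k + 1) - Ahat ^ (k + 1)‖
        ≤ ‖A * (A ^ k - Ahat ^ k)‖ + ‖(A - Ahat) * Ahat ^ k‖ := by
          rw [hsplit]; exact norm_add_le _ _
      _ ≤ k * ε * β ^ k + ε * β ^ k := by linarith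
      _ = (k + 1 : ℕ) * ε * β ^ ((k + 1) - 1) := by push_cast; ring


theorem stmt3 {n m : ℕ} (A Ahat : Matrix (Fin n) (Fin n) ℝ)
    (B Bhat : Matrix (Fin n) (Fin m) ℝ) (ε ν : ℝ) (ℓ : ℕ)
    (hε : 0 ≤ ε) (hA : ‖A - Ahat‖ ≤ ε) (hB : ‖B - Bhat‖ ≤ ε)
    (hℓ : 1 ≤ ℓ) (hν : 0 < ν) (hC : ν ≤ sigmaN (ctrbMat A B ℓ)) :
    ν - ε * (ℓ : ℝ) ^ ((3 : ℝ) / 2) * (max 1 (ε + ‖A‖)) ^ (ℓ - 1) * (‖B‖ + 1)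
      ≤ sigmaN (ctrbMat Ahat Bhat ℓ) := by
  rcases Nat.eq_zero_or_pos n with hn | hn
  · exfalso
    subst hn
    have h0 : sigmaN (ctrbMat A B ℓ) = 0 := by
      unfold sigmaN
      rw [Real.iInf_of_isEmpty, Real.sqrt_zero]
    rw [h0] at hC
    linarith
  set β := max 1 (ε + ‖A‖) with hβdef
  have hβ1 : (1 : ℝ) ≤ β := le_max_left _ _
  have hβ0 : (0 : ℝ) ≤ β := by linarith
  have hAβ : ‖A‖ ≤ β := le_trans (by linarith [norm_nonneg A]) (le_max_right _ _)
  have hAhβ : ‖Ahat‖ ≤ β := by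
    have h1 : ‖Ahat‖ - ‖A‖ ≤ ‖Ahat - A‖ := norm_sub_norm_le _ _
    rw [norm_sub_rev] at h1
    have h2 : ε + ‖A‖ ≤ β := le_max_right _ _
    linarith
  have hB0 : (0 : ℝ) ≤ ‖B‖ := norm_nonneg _
  set K := ε * β ^ (ℓ - 1) * (ℓ : ℝ) * (‖B‖ + 1) with hKdef
  have hβpow : (0 : ℝ) ≤ β ^ (ℓ - 1) := pow_nonneg hβ0 _
  have hℓR : (1 : ℝ) ≤ (ℓ : ℝ) := by exact_mod_cast hℓ
  have hKnn : 0 ≤ K := by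
    apply mul_nonneg (mul_nonneg (mul_nonneg hε hβpow) (by linarith)) (by linarith)
  -- block bounds
  have hblock : ∀ k : Fin ℓ,
      ‖(Matrix.of fun i j => (ctrbMat A B ℓ - ctrbMat Ahat Bhat ℓ) i (k, j) :
        Matrix (Fin n) (Fin m) ℝ)‖ ≤ K := by
    intro k
    have hofeq : (Matrix.of fun i j => (ctrbMat A B ℓ - ctrbMat Ahat Bhat ℓ) i (k, j) :
        Matrix (Fin n) (Fin m) ℝ) = A ^ (k : ℕ) * B - Ahat ^ (k : ℕ) * Bhat := by
      ext i j
      simp [ctrbMat, Matrix.sub_apply]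
    rw [hofeq]
    have hsplit : A ^ (k : ℕ) * B - Ahat ^ (k : ℕ) * Bhat
        = (A ^ (k : ℕ) - Ahat ^ (k : ℕ)) * B + Ahat ^ (k : ℕ) * (B - Bhat) := by
      rw [Matrix.sub_mul, Matrix.mul_sub]; abel
    have hk1 : (k : ℕ) - 1 ≤ ℓ - 1 := by omega
    have hk2 : (k : ℕ) ≤ ℓ - 1 := by omega
    have hkR : ((k : ℕ) : ℝ) + 1 ≤ (ℓ : ℝ) := by
      have : (k : ℕ) + 1 ≤ ℓ := k.2
      exact_mod_cast this
    have hp1 : β ^ ((k : ℕ) - 1) ≤ β ^ (ℓ - 1) := pow_le_pow_right₀ hβ1 hk1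
    have hp2 : β ^ (k : ℕ) ≤ β ^ (ℓ - 1) := pow_le_pow_right₀ hβ1 hk2
    have ht1 : ‖(A ^ (k : ℕ) - Ahat ^ (k : ℕ)) * B‖ ≤ (k : ℕ) * ε * β ^ (ℓ - 1) * ‖B‖ := by
      calc ‖(A ^ (k : ℕ) - Ahat ^ (k : ℕ)) * B‖
          ≤ ‖A ^ (k : ℕ) - Ahat ^ (k : ℕ)‖ * ‖B‖ := Matrix.l2_opNorm_mul _ _
        _ ≤ ((k : ℕ) * ε * β ^ ((k : ℕ) - 1)) * ‖B‖ := by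
            apply mul_le_mul_of_nonneg_right
              (norm_pow_sub_pow A Ahat β ε hβ1 hAβ hAhβ hA hε (k : ℕ)) hB0
        _ ≤ (k : ℕ) * ε * β ^ (ℓ - 1) * ‖B‖ := by
            apply mul_le_mul_of_nonneg_right _ hB0
            apply mul_le_mul_of_nonneg_left hp1
            positivity
    have ht2 : ‖Ahat ^ (k : ℕ) * (B - Bhat)‖ ≤ β ^ (ℓ - 1) * ε := by
      calc ‖Ahat ^ (k : ℕ) * (B - Bhat)‖
          ≤ ‖Ahat ^ (k : ℕ)‖ * ‖B - Bhat‖ := Matrix.l2_opNorm_mul _ _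
        _ ≤ β ^ (k : ℕ) * ε := by
            apply mul_le_mul (norm_pow_le_pow Ahat β hβ1 hAhβ _) hB (norm_nonneg _)
              (pow_nonneg hβ0 _)
        _ ≤ β ^ (ℓ - 1) * ε := mul_le_mul_of_nonneg_right hp2 hε
    calc ‖A ^ (k : ℕ) * B - Ahat ^ (k : ℕ) * Bhat‖
        ≤ ‖(A ^ (k : ℕ) - Ahat ^ (k : ℕ)) * B‖ + ‖Ahat ^ (k : ℕ) * (B - Bhat)‖ := by
          rw [hsplit]; exact norm_add_le _ _
      _ ≤ (k : ℕ) * ε * β ^ (ℓ - 1) * ‖B‖ + β ^ (ℓ - 1) * ε := by linarith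
      _ ≤ K := by
          rw [hKdef]
          nlinarith [mul_nonneg hε hβpow, mul_nonneg (mul_nonneg hε hβpow) hB0]
  have hnorm : ‖ctrbMat A B ℓ - ctrbMat Ahat Bhat ℓ‖ ≤ Real.sqrt ℓ * K :=
    block_norm_le _ K hKnn hblock
  have hlip := sigmaN_le_add hn (ctrbMat A B ℓ) (ctrbMat Ahat Bhat ℓ)
  have hfinal : Real.sqrt ℓ * K = ε * (ℓ : ℝ) ^ ((3 : ℝ) / 2) * β ^ (ℓ - 1) * (‖B‖ + 1) := by
    have hℓpos : (0 : ℝ) < (ℓ : ℝ) := by linarith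
    have h32 : (ℓ : ℝ) ^ ((3 : ℝ) / 2) = (ℓ : ℝ) * Real.sqrt ℓ := by
      rw [show (3 : ℝ) / 2 = 1 + 1 / 2 by norm_num, Real.rpow_add hℓpos, Real.rpow_one,
        ← Real.sqrt_eq_rpow]
    rw [h32, hKdef]; ring
  linarith
end

section
/- Let $\{K_k\}_{k=0}^{N-1}$ and $\{\hat{K}_k\}_{k=0}^{N-1}$ be sequences of $m \times n$ real matrices with $\|K_k - \hat{K}_k\| \le \varepsilon$ for all $k$, and let $A \in \mathbb{R}^{n\times n}$, $B \in \mathbb{R}^{n\times m}$. Define $\Psi_{k_2,k_1} = (A + BK_{k_2-1})(A+BK_{k_2-2})\cdots(A+BK_{k_1})$ and $\hat{\Psi}_{k_2,k_1} = (A + B\hat{K}_{k_2-1})\cdots(A+B\hat{K}_{k_1})$ for $0 \le k_1 \le k_2 \le N$ (empty products equal to the identity). Suppose there are $\zeta \ge 1$ and $0 < \eta < 1$ with $\|\Psi_{k_2,k_1}\| \le \zeta\eta^{k_2-k_1}$ for all $0 \le k_1 \le k_2 \le N$. If $\varepsilon \le \frac{1-\eta}{2\|B\|\zeta}$, then $\|\hat{\Psi}_{k_2,k_1}\|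 \le \zeta\big(\frac{1+\eta}{2}\big)^{k_2-k_1}$ for all $0 \le k_1 \le k_2 \le N$. -/
open scoped Matrix.Norms.L2Operator
open Matrix

/-- The transition product `(A + B K_{k₂-1}) ⋯ (A + B K_{k₁})`
(highest index on the left; empty product is the identity). -/
noncomputable def transProd {n m : ℕ} (A : Matrix (Fin n) (Fin n) ℝ)
    (B : Matrix (Fin n) (Fin m) ℝ) (K : ℕ → Matrix (Fin m) (Fin n) ℝ)
    (k₁ k₂ : ℕ) : Matrix (Fin n) (Fin n) ℝ :=
  ((List.range (k₂ - k₁)).map (fun i => A + B * K (k₂ - 1 - i))).prod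

lemma transProd_self {n m : ℕ} (A : Matrix (Fin n) (Fin n) ℝ)
    (B : Matrix (Fin n) (Fin m) ℝ) (K : ℕ → Matrix (Fin m) (Fin n) ℝ) (k : ℕ) :
    transProd A B K k k = 1 := by simp [transProd]

lemma transProd_succ {n m : ℕ} (A : Matrix (Fin n) (Fin n) ℝ)
    (B : Matrix (Fin n) (Fin m) ℝ) (K : ℕ → Matrix (Fin m) (Fin n) ℝ)
    {k₁ k₂ : ℕ} (h : k₁ ≤ k₂) :
    transProd A B K k₁ (k₂ + 1) = (A + B * K k₂) * transProd A B K k₁ k₂ := by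
  unfold transProd
  rw [Nat.succ_sub h, List.range_succ_eq_map, List.map_cons, List.prod_cons, List.map_map]
  have : ((fun i => A + B * K (k₂ + 1 - 1 - i)) ∘ Nat.succ) = fun i => A + B * K (k₂ - 1 - i) := by
    funext i
    have h2 : k₂ + 1 - 1 - Nat.succ i = k₂ - 1 - i := by omega
    simp only [Function.comp, h2]
  rw [this]
  simp

lemma transProd_tele {n m : ℕ} (A : Matrix (Fin n) (Fin n) ℝ)
    (B : Matrix (Fin n) (Fin m) ℝ) (K Khat : ℕ → Matrix (Fin m) (Fin n) ℝ)
    {k₁ k₂ : ℕ} (h : k₁ ≤ k₂) :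
    transProd A B Khat k₁ k₂ = transProd A B K k₁ k₂ +
      ∑ i ∈ Finset.range (k₂ - k₁),
        transProd A B K (k₁ + i + 1) k₂ * (B * (Khat (k₁ + i) - K (k₁ + i))) *
          transProd A B Khat k₁ (k₁ + i) := by
  induction k₂, h using Nat.le_induction with
  | base => simp [transProd_self]
  | succ k₂ h ih =>
    have hd : k₂ + 1 - k₁ = (k₂ - k₁) + 1 := by omega
    rw [transProd_succ A B Khat h, transProd_succ A B K h, hd, Finset.sum_range_succ]
    have hk : k₁ + (k₂ - k₁) = k₂ := by omega
    rw [hk]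
    have hsplit : (A + B * Khat k₂) = (A + B * K k₂) + B * (Khat k₂ - K k₂) := by
      rw [Matrix.mul_sub]; abel
    rw [hsplit, add_mul, ih, mul_add, Finset.mul_sum]
    have hterm : ∀ i ∈ Finset.range (k₂ - k₁),
        (A + B * K k₂) * (transProd A B K (k₁ + i + 1) k₂ *
          (B * (Khat (k₁ + i) - K (k₁ + i))) * transProd A B Khat k₁ (k₁ + i)) =
        transProd A B K (k₁ + i + 1) (k₂ + 1) * (B * (Khat (k₁ + i) - K (k₁ + i))) *
          transProd A B Khat k₁ (k₁ + i) := by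
      intro i hi
      rw [Finset.mem_range] at hi
      rw [transProd_succ A B K (by omega)]
      noncomm_ring
    rw [Finset.sum_congr rfl hterm, transProd_self A B K (k₂ + 1), one_mul]
    noncomm_ring

theorem stmt6 {n m N : ℕ} (A : Matrix (Fin n) (Fin n) ℝ)
    (B : Matrix (Fin n) (Fin m) ℝ) (K Khat : ℕ → Matrix (Fin m) (Fin n) ℝ)
    (ε ζ η : ℝ)
    (hK : ∀ k < N, ‖K k - Khat k‖ ≤ ε)
    (hζ : 1 ≤ ζ) (hη0 : 0 < η) (hη1 : η < 1)
    (hΨ : ∀ k₁ k₂ : ℕ, k₁ ≤ k₂ → k₂ ≤ N →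
      ‖transProd A B K k₁ k₂‖ ≤ ζ * η ^ (k₂ - k₁))
    (hε : ε ≤ (1 - η) / (2 * ‖B‖ * ζ)) :
    ∀ k₁ k₂ : ℕ, k₁ ≤ k₂ → k₂ ≤ N →
      ‖transProd A B Khat k₁ k₂‖ ≤ ζ * ((1 + η) / 2) ^ (k₂ - k₁) := by
  have hζ0 : (0:ℝ) < ζ := by linarith
  have hμη : η < (1 + η) / 2 := by linarith
  have hμ0 : (0:ℝ) < (1 + η) / 2 := by linarith
  have hkey : ‖B‖ * ε * ζ ≤ (1 - η) / 2 := by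
    rcases eq_or_lt_of_le (norm_nonneg B) with hB | hB
    · rw [← hB]; nlinarith
    · have h2 : (0:ℝ) < 2 * ‖B‖ * ζ := by positivity
      have := (le_div_iff₀ h2).mp hε
      nlinarith
  intro k₁ k₂
  induction k₂ using Nat.strong_induction_on with
  | _ k₂ IH =>
    intro h12 h2N
    rcases eq_or_lt_of_le h12 with rfl | hlt
    · have h1 := hΨ k₁ k₁ le_rfl h2N
      simpa [transProd_self] using h1
    · have hε0 : 0 ≤ ε := le_trans (norm_nonneg _) (hK k₁ (lt_of_lt_of_le hlt h2N))
      set μ := (1 + η) / 2 with hμdef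
      set d := k₂ - k₁ with hddef
      have hterm : ∀ i ∈ Finset.range d,
          ‖transProd A B K (k₁ + i + 1) k₂ * (B * (Khat (k₁ + i) - K (k₁ + i))) *
            transProd A B Khat k₁ (k₁ + i)‖ ≤ ζ * (μ - η) * (μ ^ i * η ^ (d - 1 - i)) := by
        intro i hi
        rw [Finset.mem_range] at hi
        have hid : i < k₂ - k₁ := hi
        have hX := hΨ (k₁ + i + 1) k₂ (by omega) h2N
        have hexp : k₂ - (k₁ + i + 1) = d - 1 - i := by omega
        rw [hexp] at hX
        have hY := IH (k₁ + i) (by omega) (by omega) (by omega)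
        have hYexp : k₁ + i - k₁ = i := by omega
        rw [hYexp] at hY
        have hΔ : ‖Khat (k₁ + i) - K (k₁ + i)‖ ≤ ε := by
          rw [norm_sub_rev]; exact hK _ (by omega)
        have hBΔ : ‖B * (Khat (k₁ + i) - K (k₁ + i))‖ ≤ ‖B‖ * ε :=
          (Matrix.l2_opNorm_mul B _).trans
            (mul_le_mul_of_nonneg_left hΔ (norm_nonneg B))
        have h1 : ‖transProd A B K (k₁ + i + 1) k₂ * (B * (Khat (k₁ + i) - K (k₁ + i))) *
            transProd A B Khat k₁ (k₁ + i)‖ ≤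
            ‖transProd A B K (k₁ + i + 1) k₂‖ * ‖B * (Khat (k₁ + i) - K (k₁ + i))‖ *
            ‖transProd A B Khat k₁ (k₁ + i)‖ := by
          calc ‖_ * _ * _‖ ≤ ‖transProd A B K (k₁ + i + 1) k₂ *
                (B * (Khat (k₁ + i) - K (k₁ + i)))‖ * ‖transProd A B Khat k₁ (k₁ + i)‖ :=
              Matrix.l2_opNorm_mul _ _
            _ ≤ _ := by
              gcongr
              exact Matrix.l2_opNorm_mul _ _
        have h2 : ‖transProd A B K (k₁ + i + 1) k₂‖ * ‖B * (Khat (k₁ + i) - K (k₁ + i))‖ *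
            ‖transProd A B Khat k₁ (k₁ + i)‖ ≤
            (ζ * η ^ (d - 1 - i)) * (‖B‖ * ε) * (ζ * μ ^ i) := by
          gcongr <;> positivity
        have h3 : (ζ * η ^ (d - 1 - i)) * (‖B‖ * ε) * (ζ * μ ^ i) ≤
            ζ * (μ - η) * (μ ^ i * η ^ (d - 1 - i)) := by
          have hpos : (0:ℝ) ≤ ζ * (η ^ (d - 1 - i) * μ ^ i) := by positivity
          have hme : ‖B‖ * ε * ζ ≤ μ - η := by rw [hμdef]; linarith
          calc (ζ * η ^ (d - 1 - i)) * (‖B‖ * ε) * (ζ * μ ^ i)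
              = (ζ * (η ^ (d - 1 - i) * μ ^ i)) * (‖B‖ * ε * ζ) := by ring
            _ ≤ (ζ * (η ^ (d - 1 - i) * μ ^ i)) * (μ - η) :=
              mul_le_mul_of_nonneg_left hme hpos
            _ = ζ * (μ - η) * (μ ^ i * η ^ (d - 1 - i)) := by ring
        exact le_trans h1 (le_trans h2 h3)
      have hgeom : (∑ i ∈ Finset.range d, μ ^ i * η ^ (d - 1 - i)) * (μ - η) =
          μ ^ d - η ^ d := geom_sum₂_mul μ η d
      calc ‖transProd A B Khat k₁ k₂‖
          = ‖transProd A B K k₁ k₂ + ∑ i ∈ Finset.range d,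
              transProd A B K (k₁ + i + 1) k₂ * (B * (Khat (k₁ + i) - K (k₁ + i))) *
              transProd A B Khat k₁ (k₁ + i)‖ := by rw [← transProd_tele A B K Khat h12]
        _ ≤ ‖transProd A B K k₁ k₂‖ + ∑ i ∈ Finset.range d,
              ‖transProd A B K (k₁ + i + 1) k₂ * (B * (Khat (k₁ + i) - K (k₁ + i))) *
              transProd A B Khat k₁ (k₁ + i)‖ :=
            (norm_add_le _ _).trans (by gcongr; exact norm_sum_le _ _)
        _ ≤ ζ * η ^ d + ∑ i ∈ Finset.range d, ζ * (μ - η) * (μ ^ i * η ^ (d - 1 - i)) := by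
            gcongr with i hi
            · exact hΨ k₁ k₂ h12 h2N
            · exact hterm i hi
        _ = ζ * η ^ d + ζ * (μ - η) * ∑ i ∈ Finset.range d, μ ^ i * η ^ (d - 1 - i) := by
            rw [Finset.mul_sum]
        _ = ζ * η ^ d + ζ * (μ ^ d - η ^ d) := by
            rw [mul_assoc, mul_comm (μ - η), hgeom]
        _ = ζ * μ ^ d := by ring
end
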